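/- Let S be a countable ℵ₀-categorical semigroup. Then for each of Green's relations K ∈ {R, L, H, D, J}, the set of cardinalities {|K_a| : a ∈ S} is finite. Moreover, among the K-classes that are subsemigroups of S there are only finitely many up to isomorphism, and each such K-class is ℵ₀-categorical. In particular, S has only finitely many maximal subgroups up to group isomorphism, and each maximal subgroup of S is an ℵ₀-categorical group. -/
import Mathlib


/-- Two `n`-tuples of a semigroup are automorphically equivalent if some semigroup
automorphism maps one to the other componentwise. -/
def AutRel (S : Type*) [Semigroup S] {n : ℕ} (a b : Fin n → S) : Prop :=
  ∃ φ : S ≃* S, ∀ k, φ (a k) = b k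

/-- A semigroup is ℵ₀-categorical if, for every `n ≥ 1`, the action of its automorphism
group on `n`-tuples has only finitely many orbits. -/
def Aleph0Categorical (S : Type*) [Semigroup S] : Prop :=
  ∀ n : ℕ, 1 ≤ n → ∃ t : Set (Fin n → S), t.Finite ∧
    ∀ a : Fin n → S, ∃ b ∈ t, AutRel S b a

section Green

variable (S : Type*) [Semigroup S]

/-- The principal right ideal `aS¹ = {a} ∪ aS`. -/
def rIdealSet (a : S) : Set S := {a} ∪ {x | ∃ s, x = a * s}

/-- The principal left ideal `S¹a = {a} ∪ Sa`. -/
def lIdealSet (a : S) : Set S := {a} ∪ {x | ∃ s, x = s * a}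

/-- The principal two-sided ideal `S¹aS¹ = {a} ∪ aS ∪ Sa ∪ SaS`. -/
def jIdealSet (a : S) : Set S :=
  {a} ∪ {x | ∃ s, x = a * s} ∪ {x | ∃ s, x = s * a} ∪ {x | ∃ s u, x = s * a * u}

/-- Green's relation `R`. -/
def GreenR (a b : S) : Prop := rIdealSet S a = rIdealSet S b

/-- Green's relation `L`. -/
def GreenL (a b : S) : Prop := lIdealSet S a = lIdealSet S b

/-- Green's relation `J`. -/
def GreenJ (a b : S) : Prop := jIdealSet S a = jIdealSet S b

/-- Green's relation `H = R ∩ L`. -/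
def GreenH (a b : S) : Prop := GreenR S a b ∧ GreenL S a b

/-- Green's relation `D = R ∘ L`. -/
def GreenD (a b : S) : Prop := ∃ c : S, GreenR S a c ∧ GreenL S c b

/-- A subset closed under multiplication. -/
def MulClosed (A : Set S) : Prop := ∀ a ∈ A, ∀ b ∈ A, a * b ∈ A

/-- A multiplicatively closed subset regarded as a subsemigroup. -/
def toSub (A : Set S) (h : MulClosed S A) : Subsemigroup S :=
  ⟨A, fun ha hb => h _ ha _ hb⟩

/-- The conclusion of the theorem for one of Green's relations `K`:
the set of cardinalities of `K`-classes is finite; among the `K`-classes that are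
subsemigroups there are only finitely many up to isomorphism; and every `K`-class that
is a subsemigroup is ℵ₀-categorical. -/
def GreenConclusion (rel : S → S → Prop) : Prop :=
  (Set.range fun a : S => Cardinal.mk {b : S | rel a b}).Finite ∧
  (∃ F : Set S, F.Finite ∧
    ∀ (a : S) (h : MulClosed S {b : S | rel a b}), ∃ b ∈ F,
      ∃ h' : MulClosed S {c : S | rel b c},
        Nonempty ((toSub S _ h) ≃* (toSub S _ h'))) ∧
  ∀ (a : S) (h : MulClosed S {b : S | rel a b}), Aleph0Categorical (toSub S _ h)

end Green

section Helpers

variable {S : Type*} [Semigroup S]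

lemma image_rightMul (φ : S ≃* S) (a : S) :
    φ '' {x | ∃ s, x = a * s} = {x | ∃ s, x = φ a * s} := by
  ext z
  constructor
  · rintro ⟨x, ⟨s, rfl⟩, rfl⟩
    exact ⟨φ s, by rw [map_mul]⟩
  · rintro ⟨s, rfl⟩
    exact ⟨a * φ.symm s, ⟨φ.symm s, rfl⟩, by rw [map_mul, MulEquiv.apply_symm_apply]⟩

lemma image_leftMul (φ : S ≃* S) (a : S) :
    φ '' {x | ∃ s, x = s * a} = {x | ∃ s, x = s * φ a} := by
  ext z
  constructor
  · rintro ⟨x, ⟨s, rfl⟩, rfl⟩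
    exact ⟨φ s, by rw [map_mul]⟩
  · rintro ⟨s, rfl⟩
    exact ⟨φ.symm s * a, ⟨φ.symm s, rfl⟩, by rw [map_mul, MulEquiv.apply_symm_apply]⟩

lemma image_twoSided (φ : S ≃* S) (a : S) :
    φ '' {x | ∃ s u, x = s * a * u} = {x | ∃ s u, x = s * φ a * u} := by
  ext z
  constructor
  · rintro ⟨x, ⟨s, u, rfl⟩, rfl⟩
    exact ⟨φ s, φ u, by rw [map_mul, map_mul]⟩
  · rintro ⟨s, u, rfl⟩
    refine ⟨φ.symm s * a * φ.symm u, ⟨φ.symm s, φ.symm u, rfl⟩, ?_⟩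
    rw [map_mul, map_mul, MulEquiv.apply_symm_apply, MulEquiv.apply_symm_apply]

lemma rIdeal_image (φ : S ≃* S) (a : S) :
    rIdealSet S (φ a) = φ '' rIdealSet S a := by
  unfold rIdealSet
  rw [Set.image_union, image_rightMul, Set.image_singleton]

lemma lIdeal_image (φ : S ≃* S) (a : S) :
    lIdealSet S (φ a) = φ '' lIdealSet S a := by
  unfold lIdealSet
  rw [Set.image_union, image_leftMul, Set.image_singleton]

lemma jIdeal_image (φ : S ≃* S) (a : S) :
    jIdealSet S (φ a) = φ '' jIdealSet S a := by
  unfold jIdealSet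
  rw [Set.image_union, Set.image_union, Set.image_union, image_rightMul,
    image_leftMul, image_twoSided, Set.image_singleton]

lemma greenR_iff (φ : S ≃* S) (x y : S) : GreenR S (φ x) (φ y) ↔ GreenR S x y := by
  unfold GreenR
  rw [rIdeal_image, rIdeal_image, Set.image_eq_image φ.injective]

lemma greenL_iff (φ : S ≃* S) (x y : S) : GreenL S (φ x) (φ y) ↔ GreenL S x y := by
  unfold GreenL
  rw [lIdeal_image, lIdeal_image, Set.image_eq_image φ.injective]

lemma greenJ_iff (φ : S ≃* S) (x y : S) : GreenJ S (φ x) (φ y) ↔ GreenJ S x y := by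
  unfold GreenJ
  rw [jIdeal_image, jIdeal_image, Set.image_eq_image φ.injective]

lemma greenH_iff (φ : S ≃* S) (x y : S) : GreenH S (φ x) (φ y) ↔ GreenH S x y :=
  and_congr (greenR_iff φ x y) (greenL_iff φ x y)

lemma greenD_iff (φ : S ≃* S) (x y : S) : GreenD S (φ x) (φ y) ↔ GreenD S x y := by
  constructor
  · rintro ⟨c, hR, hL⟩
    refine ⟨φ.symm c, ?_, ?_⟩
    · rw [← greenR_iff φ, MulEquiv.apply_symm_apply]; exact hR
    · rw [← greenL_iff φ, MulEquiv.apply_symm_apply]; exact hL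
  · rintro ⟨c, hR, hL⟩
    exact ⟨φ c, (greenR_iff φ _ _).mpr hR, (greenL_iff φ _ _).mpr hL⟩

end Helpers

section Master

variable {S : Type*} [Semigroup S] (rel : S → S → Prop)

/-- An automorphism restricts to an equivalence between `rel`-classes. -/
def classEquiv (hinv : ∀ (φ : S ≃* S) (x y : S), rel (φ x) (φ y) ↔ rel x y)
    (φ : S ≃* S) (a : S) : {b : S | rel a b} ≃ {b : S | rel (φ a) b} where
  toFun x := ⟨φ x, (hinv φ a x).mpr x.2⟩
  invFun y := ⟨φ.symm y, by
    have h := hinv φ a (φ.symm y)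
    rw [MulEquiv.apply_symm_apply] at h
    exact h.mp y.2⟩
  left_inv x := Subtype.ext (by simp)
  right_inv y := Subtype.ext (by simp)

lemma mulClosed_transfer (hinv : ∀ (φ : S ≃* S) (x y : S), rel (φ x) (φ y) ↔ rel x y)
    (φ : S ≃* S) (a : S)
    (h : MulClosed S {b | rel (φ a) b}) : MulClosed S {b | rel a b} := by
  intro x hx y hy
  have hx' : rel (φ a) (φ x) := (hinv φ a x).mpr hx
  have hy' : rel (φ a) (φ y) := (hinv φ a y).mpr hy
  have hxy := h _ hx' _ hy'
  rw [← map_mul] at hxy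
  exact (hinv φ a (x * y)).mp hxy

/-- An automorphism restricts to an isomorphism between `rel`-classes that are
subsemigroups. -/
def classMulEquiv (hinv : ∀ (φ : S ≃* S) (x y : S), rel (φ x) (φ y) ↔ rel x y)
    (φ : S ≃* S) (a : S)
    (hA : MulClosed S {b : S | rel a b}) (hB : MulClosed S {b : S | rel (φ a) b}) :
    (toSub S _ hA) ≃* (toSub S _ hB) :=
  { classEquiv rel hinv φ a with
    map_mul' := fun x y => Subtype.ext (map_mul φ x.1 y.1) }

/-- An automorphism fixing `a` and preserving `rel` restricts to an automorphism of the
class of `a` regarded as a subsemigroup. -/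
def stabMulEquiv (hinv : ∀ (φ : S ≃* S) (x y : S), rel (φ x) (φ y) ↔ rel x y)
    (ψ : S ≃* S) (a : S) (ha : ψ a = a)
    (h : MulClosed S {b : S | rel a b}) :
    (toSub S _ h) ≃* (toSub S _ h) :=
  have h' : MulClosed S {b : S | rel (ψ a) b} := by rw [ha]; exact h
  (classMulEquiv rel hinv ψ a h h').trans
    (MulEquiv.subsemigroupCongr (SetLike.ext' (show ({b : S | rel (ψ a) b} : Set S) =
      {b : S | rel a b} by rw [ha])))

lemma cat_class (hinv : ∀ (φ : S ≃* S) (x y : S), rel (φ x) (φ y) ↔ rel x y)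
    (hrefl : ∀ a, rel a a) (hcat : Aleph0Categorical S) (a : S)
    (h : MulClosed S {b : S | rel a b}) : Aleph0Categorical (toSub S _ h) := by
  intro n _
  obtain ⟨t, ht, hrep⟩ := hcat (n + 1) (by omega)
  set T := toSub S {b : S | rel a b} h with hT
  let ext : (Fin n → T) → (Fin (n + 1) → S) := fun x => Fin.cons a (fun k => (x k : S))
  have hchoice : ∀ x : Fin n → T, ∃ c, c ∈ t ∧ AutRel S c (ext x) := by
    intro x
    obtain ⟨b, hb, hab⟩ := hrep (ext x)
    exact ⟨b, hb, hab⟩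
  choose f hf₁ hf₂ using hchoice
  haveI : Nonempty (Fin n → T) := ⟨fun _ => ⟨a, hrefl a⟩⟩
  let g : (Fin (n + 1) → S) → (Fin n → T) := Function.invFun f
  refine ⟨g '' Set.range f, ((ht.subset (Set.range_subset_iff.mpr hf₁)).image g), ?_⟩
  intro x
  refine ⟨g (f x), ⟨f x, ⟨x, rfl⟩, rfl⟩, ?_⟩
  set y := g (f x) with hy
  have hfy : f y = f x := Function.invFun_eq ⟨x, rfl⟩
  obtain ⟨φx, hφx⟩ := hf₂ x
  obtain ⟨φy, hφy⟩ := hf₂ y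
  let ψ : S ≃* S := φy.symm.trans φx
  have h0x : φx (f x 0) = a := by
    have := hφx 0
    simpa [ext] using this
  have h0y : φy (f y 0) = a := by
    have := hφy 0
    simpa [ext] using this
  have ha : ψ a = a := by
    have : φy.symm a = f y 0 := by rw [← h0y, MulEquiv.symm_apply_apply]
    show φx (φy.symm a) = a
    rw [this, hfy, h0x]
  have hψk : ∀ k : Fin n, ψ ((y k : S)) = (x k : S) := by
    intro k
    have hyk : φy (f y k.succ) = (y k : S) := by
      have := hφy k.succ
      simpa [ext, Fin.cons_succ] using this
    have hxk : φx (f x k.succ) = (x k : S) := by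
      have := hφx k.succ
      simpa [ext, Fin.cons_succ] using this
    have : φy.symm ((y k : S)) = f y k.succ := by
      rw [← hyk, MulEquiv.symm_apply_apply]
    show φx (φy.symm ((y k : S))) = (x k : S)
    rw [this, hfy, hxk]
  refine ⟨stabMulEquiv rel hinv ψ a ha h, fun k => Subtype.ext ?_⟩
  show ψ ((y k : S)) = (x k : S)
  exact hψk k

lemma master (hinv : ∀ (φ : S ≃* S) (x y : S), rel (φ x) (φ y) ↔ rel x y)
    (hrefl : ∀ a, rel a a) (hcat : Aleph0Categorical S) :
    GreenConclusion S rel := by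
  obtain ⟨t, ht, hrep⟩ := hcat 1 le_rfl
  refine ⟨?_, ?_, fun a h => cat_class rel hinv hrefl hcat a h⟩
  · have hsub : (Set.range fun a : S => Cardinal.mk {b : S | rel a b}) ⊆
        (fun c : Fin 1 → S => Cardinal.mk {b : S | rel (c 0) b}) '' t := by
      rintro _ ⟨a, rfl⟩
      obtain ⟨c, hc, φ, hφ⟩ := hrep (fun _ => a)
      have hca : φ (c 0) = a := hφ 0
      refine ⟨c, hc, ?_⟩
      rw [← hca]
      exact Cardinal.mk_congr (classEquiv rel hinv φ (c 0))
    exact (ht.image _).subset hsub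
  · refine ⟨(fun c : Fin 1 → S => c 0) '' t, ht.image _, ?_⟩
    intro a h
    obtain ⟨c, hc, φ, hφ⟩ := hrep (fun _ => a)
    have hca : φ (c 0) = a := hφ 0
    subst hca
    have h' : MulClosed S {b : S | rel (c 0) b} := mulClosed_transfer rel hinv φ (c 0) h
    exact ⟨c 0, ⟨c, hc, rfl⟩, h', ⟨(classMulEquiv rel hinv φ (c 0) h' h).symm⟩⟩

end Master


/-- Let `S` be a countable ℵ₀-categorical semigroup.  For each of Green's relations
`K ∈ {R, L, H, D, J}` the set of cardinalities of `K`-classes is finite, the `K`-classes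
that are subsemigroups form finitely many isomorphism classes, and each such `K`-class is
ℵ₀-categorical.  In particular the maximal subgroups (`H`-classes of idempotents) fall
into finitely many isomorphism classes and each is ℵ₀-categorical. -/
theorem aleph0Categorical_green (S : Type*) [Semigroup S] [Countable S]
    (hcat : Aleph0Categorical S) :
    GreenConclusion S (GreenR S) ∧ GreenConclusion S (GreenL S) ∧
    GreenConclusion S (GreenH S) ∧ GreenConclusion S (GreenD S) ∧
    GreenConclusion S (GreenJ S) ∧
    ((∃ F : Set S, F.Finite ∧ (∀ e ∈ F, e * e = e) ∧
        ∀ e : S, e * e = e → ∀ h : MulClosed S {b : S | GreenH S e b}, ∃ f ∈ F,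
          ∃ h' : MulClosed S {b : S | GreenH S f b},
            Nonempty ((toSub S _ h) ≃* (toSub S _ h'))) ∧
      ∀ e : S, e * e = e → ∀ h : MulClosed S {b : S | GreenH S e b},
        Aleph0Categorical (toSub S _ h)) := by
  have hrH : ∀ a : S, GreenH S a a := fun a => ⟨rfl, rfl⟩
  refine ⟨master (GreenR S) (fun φ x y => greenR_iff φ x y) (fun a => rfl) hcat,
    master (GreenL S) (fun φ x y => greenL_iff φ x y) (fun a => rfl) hcat,
    master (GreenH S) (fun φ x y => greenH_iff φ x y) hrH hcat,
    master (GreenD S) (fun φ x y => greenD_iff φ x y) (fun a => ⟨a, rfl, rfl⟩) hcat,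
    master (GreenJ S) (fun φ x y => greenJ_iff φ x y) (fun a => rfl) hcat,
    ?_, fun e _ h => cat_class (GreenH S) (fun φ x y => greenH_iff φ x y) hrH hcat e h⟩
  obtain ⟨t, ht, hrep⟩ := hcat 1 le_rfl
  refine ⟨{x | (∃ c ∈ t, c 0 = x) ∧ x * x = x}, ?_, fun e he => he.2, ?_⟩
  · refine (ht.image (fun c : Fin 1 → S => c 0)).subset ?_
    rintro x ⟨⟨c, hc, rfl⟩, -⟩
    exact ⟨c, hc, rfl⟩
  · intro e hee h
    obtain ⟨c, hc, φ, hφ⟩ := hrep (fun _ => e)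
    have hca : φ (c 0) = e := hφ 0
    subst hca
    have hidem : c 0 * c 0 = c 0 := φ.injective (by rw [map_mul]; exact hee)
    have h' : MulClosed S {b | GreenH S (c 0) b} :=
      mulClosed_transfer _ (fun φ x y => greenH_iff φ x y) φ (c 0) h
    exact ⟨c 0, ⟨⟨c, hc, rfl⟩, hidem⟩, h',
      ⟨(classMulEquiv _ (fun φ x y => greenH_iff φ x y) φ (c 0) h' h).symm⟩⟩
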